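/- arXiv:1710.09771 — 2 statements merged into one kernel-verified Lean document; each statement's English description precedes it below -/
import Mathlib

section
/- Let 0 ≤ S < T < ∞ and x ∈ C([-τ,T],ℝ^d). Define x^S ∈ C([-τ,T-S],ℝ^d) by x^S(t) = x(S+t) for t ∈ [-τ,T-S]. Then I_T(x) = I_S(x|_{[-τ,S]}) + I_{T-S}(x^S) (with the convention ∞ + a = ∞). -/
open MeasureTheory Set Metric
open scoped ENNReal

noncomputable section

/-- `ℝ^d`. -/
abbrev Vec (d : ℕ) := EuclideanSpace ℝ (Fin d)

/-- The state space `𝐂 = C([-τ,0],ℝ^d)`. -/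
abbrev Hist (τ : ℝ) (d : ℕ) := C(Icc (-τ) (0:ℝ), Vec d)

/-- The path space `C([-τ,T],ℝ^d)`. -/
abbrev Traj (τ T : ℝ) (d : ℕ) := C(Icc (-τ) T, Vec d)

/-- Matrix acting on a vector. -/
def matVec {d m : ℕ} (M : Matrix (Fin d) (Fin m) ℝ) (v : Vec m) : Vec d :=
  WithLp.toLp 2 (fun i => ∑ j, M i j * v j)

/-- Squared Frobenius norm of a matrix. -/
def frobSq {d m : ℕ} (M : Matrix (Fin d) (Fin m) ℝ) : ℝ := ∑ i, ∑ j, (M i j) ^ 2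

/-- Frobenius norm of a matrix. -/
def frobNorm {d m : ℕ} (M : Matrix (Fin d) (Fin m) ℝ) : ℝ := Real.sqrt (frobSq M)

/-- Evaluation of a path at a time `t ∈ [-τ,T]` (clamped). -/
def ev {d : ℕ} {τ T : ℝ} (h : -τ ≤ T) (x : Traj τ T d) (t : ℝ) : Vec d :=
  x (projIcc (-τ) T h t)

/-- The history segment `x_t ∈ 𝐂` of a path `x ∈ C([-τ,T],ℝ^d)`, for `t ∈ [0,T]`. -/
def seg {d : ℕ} {τ T : ℝ} (h : -τ ≤ T) (x : Traj τ T d) (t : ℝ) : Hist τ d :=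
  ⟨fun s => x (projIcc (-τ) T h (t + s.1)),
    x.continuous.comp <| continuous_projIcc.comp <| continuous_const.add continuous_subtype_val⟩

/-- The uniform Lipschitz assumption on the coefficients:
`|b(φ)−b(ψ)|² + |σ(φ)−σ(ψ)|² ≤ κ₁ ‖φ−ψ‖²`. -/
def LipCoeff {d m : ℕ} {τ : ℝ} (b : Hist τ d → Vec d)
    (σ' : Hist τ d → Matrix (Fin d) (Fin m) ℝ) (κ₁ : ℝ) : Prop :=
  ∀ φ ψ : Hist τ d, ‖b φ - b ψ‖ ^ 2 + frobSq (σ' φ - σ' ψ) ≤ κ₁ * ‖φ - ψ‖ ^ 2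

/-- The linear growth bound `|b(φ)|² + |σ(φ)|² ≤ κ₂ (1 + ‖φ‖²)`. -/
def GrowthCoeff {d m : ℕ} {τ : ℝ} (b : Hist τ d → Vec d)
    (σ' : Hist τ d → Matrix (Fin d) (Fin m) ℝ) (κ₂ : ℝ) : Prop :=
  ∀ φ : Hist τ d, ‖b φ‖ ^ 2 + frobSq (σ' φ) ≤ κ₂ * (1 + ‖φ‖ ^ 2)

/-- The set `U_T(x)` of controls `u ∈ L²([0,T],ℝ^m)` satisfying
`x(t) = x(0) + ∫₀ᵗ b(x_s) ds + ∫₀ᵗ σ(x_s) u(s) ds` for `t ∈ [0,T]`. -/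
def controls {d m : ℕ} {τ T : ℝ} (h : -τ ≤ T) (b : Hist τ d → Vec d)
    (σ' : Hist τ d → Matrix (Fin d) (Fin m) ℝ) (x : Traj τ T d) : Set (ℝ → Vec m) :=
  {u | MemLp u 2 (volume.restrict (Icc 0 T)) ∧
    ∀ t ∈ Icc (0:ℝ) T,
      ev h x t = ev h x 0 + (∫ s in (0:ℝ)..t, b (seg h x s)) +
        ∫ s in (0:ℝ)..t, matVec (σ' (seg h x s)) (u s)}

/-- The rate function `I_T(x) = inf_{u ∈ U_T(x)} ½∫₀ᵀ |u(s)|² ds` (with value `∞` if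
`U_T(x) = ∅`). -/
def rate {d m : ℕ} {τ T : ℝ} (h : -τ ≤ T) (b : Hist τ d → Vec d)
    (σ' : Hist τ d → Matrix (Fin d) (Fin m) ℝ) (x : Traj τ T d) : ℝ≥0∞ :=
  ⨅ (u : ℝ → Vec m) (_ : u ∈ controls h b σ' x),
    ENNReal.ofReal ((1/2) * ∫ s in (0:ℝ)..T, ‖u s‖ ^ 2)

open Classical in
/-- The rate function `I_T^φ(x)`, which is `I_T(x)` if `x₀ = φ` and `∞` otherwise. -/
def rateAt {d m : ℕ} {τ T : ℝ} (h : -τ ≤ T) (b : Hist τ d → Vec d)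
    (σ' : Hist τ d → Matrix (Fin d) (Fin m) ℝ) (φ : Hist τ d) (x : Traj τ T d) : ℝ≥0∞ :=
  if seg h x 0 = φ then rate h b σ' x else ⊤

/-- Restriction of `x ∈ C([-τ,T],ℝ^d)` to `[-τ,S]`. -/
def restrictTraj {d : ℕ} {τ T : ℝ} (S : ℝ) (hST : S ≤ T) (x : Traj τ T d) :
    Traj τ S d :=
  ⟨fun t => x ⟨t.1, t.2.1, t.2.2.trans hST⟩,
    x.continuous.comp <| Continuous.subtype_mk continuous_subtype_val _⟩

/-- The shifted path `x^S ∈ C([-τ,T-S],ℝ^d)`, `x^S(t) = x(S+t)`. -/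
def shiftTraj {d : ℕ} {τ T : ℝ} (h : -τ ≤ T) (S : ℝ) (x : Traj τ T d) : Traj τ (T - S) d :=
  ⟨fun t => x (projIcc (-τ) T h (S + t.1)),
    x.continuous.comp <| continuous_projIcc.comp <| continuous_const.add continuous_subtype_val⟩

lemma matVec_apply {d m : ℕ} (M : Matrix (Fin d) (Fin m) ℝ) (v : Vec m) (i : Fin d) :
    matVec M v i = ∑ j, M i j * v j := rfl

lemma continuous_matVec {d m : ℕ} :
    Continuous fun p : Matrix (Fin d) (Fin m) ℝ × Vec m => matVec p.1 p.2 := by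
  unfold matVec; fun_prop

lemma norm_matVec_le {d m : ℕ} (M : Matrix (Fin d) (Fin m) ℝ) (v : Vec m) :
    ‖matVec M v‖ ≤ frobNorm M * ‖v‖ := by
  have hsq : ∀ {k : ℕ} (w : Vec k), (∑ i, ‖w i‖^2) = ∑ j, (w j)^2 :=
    fun w => Finset.sum_congr rfl fun j _ => by rw [Real.norm_eq_abs, sq_abs]
  have hv : ‖v‖ = Real.sqrt (∑ j, (v j)^2 : ℝ) := by
    rw [EuclideanSpace.norm_eq, hsq]
  have hfs : (0:ℝ) ≤ frobSq M := by unfold frobSq; positivity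
  rw [EuclideanSpace.norm_eq, hv, frobNorm, ← Real.sqrt_mul hfs _]
  apply Real.sqrt_le_sqrt
  have : ∀ i, ‖matVec M v i‖ ^ 2 ≤ (∑ j, M i j ^2) * (∑ j, (v j)^2) := by
    intro i
    rw [matVec_apply, Real.norm_eq_abs, sq_abs]
    exact Finset.sum_mul_sq_le_sq_mul_sq _ _ _
  calc ∑ i, ‖matVec M v i‖^2 ≤ ∑ i, (∑ j, M i j^2) * (∑ j, (v j)^2) :=
        Finset.sum_le_sum (fun i _ => this i)
    _ = frobSq M * (∑ j, (v j)^2) := by rw [frobSq, Finset.sum_mul]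

lemma continuous_seg {d : ℕ} {τ T : ℝ} (h : -τ ≤ T) (x : Traj τ T d) :
    Continuous fun s : ℝ => seg h x s := by
  have : (fun s : ℝ => seg h x s) = ⇑(ContinuousMap.curry
      (x.comp ⟨fun p : ℝ × Icc (-τ) (0:ℝ) => projIcc (-τ) T h (p.1 + p.2.1),
        continuous_projIcc.comp (continuous_fst.add (continuous_subtype_val.comp continuous_snd))⟩)) := by
    funext s; ext σ; rfl
  rw [this]; exact (ContinuousMap.curry _).continuous

lemma seg_restrict {d : ℕ} {τ S T : ℝ} (hτ : 0 < τ) (hST : S ≤ T)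
    (h1 : -τ ≤ S) (h : -τ ≤ T) (x : Traj τ T d) {s : ℝ} (hs : s ∈ Icc 0 S) :
    seg h1 (restrictTraj S hST x) s = seg h x s := by
  refine ContinuousMap.ext fun σ => ?_
  have hmem : s + σ.1 ∈ Icc (-τ) S := ⟨by have := σ.2.1; have := hs.1; linarith,
    by have := σ.2.2; have := hs.2; linarith⟩
  have hmem' : s + σ.1 ∈ Icc (-τ) T := ⟨hmem.1, hmem.2.trans hST⟩
  show (restrictTraj S hST x) (projIcc (-τ) S h1 (s + σ.1)) = x (projIcc (-τ) T h (s + σ.1))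
  rw [projIcc_of_mem h1 hmem, projIcc_of_mem h hmem']
  rfl

lemma ev_restrict {d : ℕ} {τ S T : ℝ} (hST : S ≤ T)
    (h1 : -τ ≤ S) (h : -τ ≤ T) (x : Traj τ T d) {t : ℝ} (ht : t ∈ Icc (-τ) S) :
    ev h1 (restrictTraj S hST x) t = ev h x t := by
  have ht' : t ∈ Icc (-τ) T := ⟨ht.1, ht.2.trans hST⟩
  show (restrictTraj S hST x) (projIcc (-τ) S h1 t) = x (projIcc (-τ) T h t)
  rw [projIcc_of_mem h1 ht, projIcc_of_mem h ht']
  rfl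

lemma seg_shift {d : ℕ} {τ S T : ℝ} (hτ : 0 < τ) (hS : 0 ≤ S) (hST : S ≤ T)
    (h2 : -τ ≤ T - S) (h : -τ ≤ T) (x : Traj τ T d) {s : ℝ} (hs : s ∈ Icc 0 (T - S)) :
    seg h2 (shiftTraj h S x) s = seg h x (S + s) := by
  refine ContinuousMap.ext fun σ => ?_
  have hmem : s + σ.1 ∈ Icc (-τ) (T - S) := ⟨by have := σ.2.1; have := hs.1; linarith,
    by have := σ.2.2; have := hs.2; linarith⟩
  show x (projIcc (-τ) T h (S + (projIcc (-τ) (T-S) h2 (s + σ.1)).1))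
      = x (projIcc (-τ) T h (S + s + σ.1))
  rw [projIcc_of_mem h2 hmem]
  norm_num [add_assoc]

lemma ev_shift {d : ℕ} {τ S T : ℝ} (hS : 0 ≤ S) (hST : S ≤ T)
    (h2 : -τ ≤ T - S) (h : -τ ≤ T) (x : Traj τ T d) {t : ℝ} (ht : t ∈ Icc (-τ) (T - S)) :
    ev h2 (shiftTraj h S x) t = ev h x (S + t) := by
  have ht' : S + t ∈ Icc (-τ) T := ⟨by have := ht.1; linarith, by have := ht.2; linarith⟩
  show x (projIcc (-τ) T h (S + (projIcc (-τ) (T-S) h2 t).1)) = x (projIcc (-τ) T h (S + t))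
  rw [projIcc_of_mem h2 ht]

lemma isFiniteRestrictIcc (a c : ℝ) : IsFiniteMeasure (volume.restrict (Icc a c)) := by
  constructor
  rw [Measure.restrict_apply_univ]
  exact measure_Icc_lt_top

set_option maxHeartbeats 1000000 in
lemma integrableOn_matVec {d m : ℕ} {a c : ℝ}
    (A : ℝ → Matrix (Fin d) (Fin m) ℝ) (hA : Continuous A) {u : ℝ → Vec m}
    (hu : MemLp u 2 (volume.restrict (Icc a c))) :
    IntegrableOn (fun s => matVec (A s) (u s)) (Icc a c) volume := by
  haveI := isFiniteRestrictIcc a c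
  have hui : Integrable u (volume.restrict (Icc a c)) := hu.integrable one_le_two
  have hfn : Continuous fun s => frobNorm (A s) := by
    unfold frobNorm frobSq
    have : Continuous fun s => ∑ i, ∑ j, (A s i j)^2 := by
      apply continuous_finset_sum _ fun i _ => ?_
      apply continuous_finset_sum _ fun j _ => ?_
      exact (((continuous_apply j).comp ((continuous_apply i).comp hA))).pow 2
    exact Real.continuous_sqrt.comp this
  obtain ⟨C, hC⟩ := isCompact_Icc.exists_bound_of_continuousOn
    (f := fun s => frobNorm (A s)) hfn.continuousOn
  haveI : TopologicalSpace.PseudoMetrizableSpace (Matrix (Fin d) (Fin m) ℝ) :=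
    inferInstanceAs (TopologicalSpace.PseudoMetrizableSpace (Fin d → Fin m → ℝ))
  have hmeas : AEStronglyMeasurable (fun s => matVec (A s) (u s))
      (volume.restrict (Icc a c)) :=
    continuous_matVec.comp_aestronglyMeasurable
      ((hA.aestronglyMeasurable).prodMk hu.aestronglyMeasurable)
  refine Integrable.mono' (g := fun s => C * ‖u s‖) (hui.norm.const_mul C) hmeas ?_
  filter_upwards [ae_restrict_mem measurableSet_Icc] with s hs
  calc ‖matVec (A s) (u s)‖ ≤ frobNorm (A s) * ‖u s‖ := norm_matVec_le _ _
    _ ≤ C * ‖u s‖ := by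
        apply mul_le_mul_of_nonneg_right _ (norm_nonneg _)
        exact (le_abs_self _).trans (by simpa using hC s hs)

lemma intervalIntegrable_matVec {d m : ℕ} {a c a' c' : ℝ}
    (A : ℝ → Matrix (Fin d) (Fin m) ℝ) (hA : Continuous A) {u : ℝ → Vec m}
    (hu : MemLp u 2 (volume.restrict (Icc a c))) (hsub : Set.uIoc a' c' ⊆ Icc a c) :
    IntervalIntegrable (fun s => matVec (A s) (u s)) volume a' c' := by
  rw [intervalIntegrable_iff]
  exact (integrableOn_matVec A hA hu).mono_set hsub

lemma integrableOn_sq_norm {m : ℕ} {a c : ℝ} {u : ℝ → Vec m}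
    (hu : MemLp u 2 (volume.restrict (Icc a c))) :
    IntegrableOn (fun s => ‖u s‖^2) (Icc a c) volume :=
  (memLp_two_iff_integrable_sq_norm hu.aestronglyMeasurable).mp hu

lemma memLp_shift {m : ℕ} {S T : ℝ} {u : ℝ → Vec m}
    (hu : MemLp u 2 (volume.restrict (Icc S T))) :
    MemLp (fun r => u (r + S)) 2 (volume.restrict (Icc 0 (T - S))) := by
  have hpre : (fun r : ℝ => r + S) ⁻¹' (Icc S T) = Icc 0 (T - S) := by
    ext r; simp only [mem_preimage, mem_Icc]
    constructor <;> intro hr <;> constructor <;> linarith [hr.1, hr.2]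
  have hmp : MeasurePreserving (fun r : ℝ => r + S)
      (volume.restrict (Icc 0 (T - S))) (volume.restrict (Icc S T)) := by
    have := (measurePreserving_add_right volume S).restrict_preimage
      (s := Icc S T) measurableSet_Icc
    rwa [hpre] at this
  exact hu.comp_measurePreserving hmp

lemma memLp_unshift {m : ℕ} {S T : ℝ} {u : ℝ → Vec m}
    (hu : MemLp u 2 (volume.restrict (Icc 0 (T - S)))) :
    MemLp (fun r => u (r - S)) 2 (volume.restrict (Icc S T)) := by
  have hpre : (fun r : ℝ => r - S) ⁻¹' (Icc 0 (T - S)) = Icc S T := by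
    ext r; simp only [mem_preimage, mem_Icc]
    constructor <;> intro hr <;> constructor <;> linarith [hr.1, hr.2]
  have hmp : MeasurePreserving (fun r : ℝ => r - S)
      (volume.restrict (Icc S T)) (volume.restrict (Icc 0 (T - S))) := by
    have := (measurePreserving_sub_right volume S).restrict_preimage
      (s := Icc 0 (T - S)) measurableSet_Icc
    rwa [hpre] at this
  exact hu.comp_measurePreserving hmp

lemma ae_ne_restrict (s : Set ℝ) (c : ℝ) : ∀ᵐ x ∂(volume.restrict s), x ≠ c := by
  rw [Filter.eventually_iff, mem_ae_iff]
  have : {x : ℝ | x ≠ c}ᶜ = {c} := by ext y; simp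
  rw [this]
  exact le_antisymm ((Measure.restrict_le_self _).trans_eq Real.volume_singleton) (zero_le)

section Controls

variable {d m : ℕ} {τ S T : ℝ} (hτ : 0 < τ) (hS : 0 ≤ S) (hST : S ≤ T)
  (h : -τ ≤ T) (h1 : -τ ≤ S) (h2 : -τ ≤ T - S)
  {b : Hist τ d → Vec d} {σ' : Hist τ d → Matrix (Fin d) (Fin m) ℝ}
  (hb : Continuous b) (hσ : Continuous σ')
  (x : Traj τ T d) {u : ℝ → Vec m}

include hτ hS hST

lemma controls_restrict (hu : u ∈ controls h b σ' x) :
    u ∈ controls h1 b σ' (restrictTraj S hST x) := by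
  constructor
  · exact hu.1.mono_measure (Measure.restrict_mono (Icc_subset_Icc le_rfl hST) le_rfl)
  · intro t ht
    have ht' : t ∈ Icc (0:ℝ) T := ⟨ht.1, ht.2.trans hST⟩
    rw [ev_restrict hST h1 h x ⟨by linarith [ht.1], ht.2⟩,
        ev_restrict hST h1 h x ⟨by linarith, hS⟩,
        show (∫ s in (0:ℝ)..t, b (seg h1 (restrictTraj S hST x) s))
            = ∫ s in (0:ℝ)..t, b (seg h x s) from
          intervalIntegral.integral_congr fun s hs => by
            rw [uIcc_of_le ht.1] at hs
            rw [seg_restrict hτ hST h1 h x ⟨hs.1, hs.2.trans ht.2⟩],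
        show (∫ s in (0:ℝ)..t, matVec (σ' (seg h1 (restrictTraj S hST x) s)) (u s))
            = ∫ s in (0:ℝ)..t, matVec (σ' (seg h x s)) (u s) from
          intervalIntegral.integral_congr fun s hs => by
            rw [uIcc_of_le ht.1] at hs
            rw [seg_restrict hτ hST h1 h x ⟨hs.1, hs.2.trans ht.2⟩]]
    exact hu.2 t ht'

include hb hσ in
lemma controls_shift (hu : u ∈ controls h b σ' x) :
    (fun r => u (r + S)) ∈ controls h2 b σ' (shiftTraj h S x) := by
  have hA : Continuous fun s => σ' (seg h x s) := hσ.comp (continuous_seg h x)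
  have hbc : Continuous fun s => b (seg h x s) := hb.comp (continuous_seg h x)
  constructor
  · exact memLp_shift (hu.1.mono_measure (Measure.restrict_mono (Icc_subset_Icc hS le_rfl) le_rfl))
  · intro t ht
    have ht1 : t + S ∈ Icc (0:ℝ) T := ⟨by linarith [ht.1], by linarith [ht.2]⟩
    have hS1 : S ∈ Icc (0:ℝ) T := ⟨hS, hST⟩
    rw [ev_shift hS hST h2 h x ⟨by linarith [ht.1], ht.2⟩,
        ev_shift hS hST h2 h x ⟨by linarith, by linarith [ht.2, ht.1]⟩, add_zero,
        show (∫ s in (0:ℝ)..t, b (seg h2 (shiftTraj h S x) s))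
            = ∫ s in (0:ℝ)..t, b (seg h x (s + S)) from
          intervalIntegral.integral_congr fun s hs => by
            rw [uIcc_of_le ht.1] at hs
            rw [seg_shift hτ hS hST h2 h x ⟨hs.1, hs.2.trans ht.2⟩, add_comm],
        show (∫ s in (0:ℝ)..t, matVec (σ' (seg h2 (shiftTraj h S x) s)) (u (s + S)))
            = ∫ s in (0:ℝ)..t, matVec (σ' (seg h x (s + S))) (u (s + S)) from
          intervalIntegral.integral_congr fun s hs => by
            rw [uIcc_of_le ht.1] at hs
            rw [seg_shift hτ hS hST h2 h x ⟨hs.1, hs.2.trans ht.2⟩, add_comm],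
        intervalIntegral.integral_comp_add_right (fun r => b (seg h x r)) S,
        intervalIntegral.integral_comp_add_right (fun r => matVec (σ' (seg h x r)) (u r)) S,
        zero_add]
    have hbi1 : IntervalIntegrable (fun r => b (seg h x r)) volume 0 (t + S) :=
      hbc.intervalIntegrable _ _
    have hbi2 : IntervalIntegrable (fun r => b (seg h x r)) volume 0 S :=
      hbc.intervalIntegrable _ _
    have hMi1 : IntervalIntegrable (fun r => matVec (σ' (seg h x r)) (u r)) volume 0 (t + S) :=
      intervalIntegrable_matVec _ hA hu.1 (by
        rw [uIoc_of_le (by linarith [ht.1] : (0:ℝ) ≤ t + S)]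
        exact Ioc_subset_Icc_self.trans (Icc_subset_Icc le_rfl ht1.2))
    have hMi2 : IntervalIntegrable (fun r => matVec (σ' (seg h x r)) (u r)) volume 0 S :=
      intervalIntegrable_matVec _ hA hu.1 (by
        rw [uIoc_of_le hS]
        exact Ioc_subset_Icc_self.trans (Icc_subset_Icc le_rfl hST))
    rw [show S + t = t + S from add_comm S t,
        ← intervalIntegral.integral_interval_sub_left hbi1 hbi2,
        ← intervalIntegral.integral_interval_sub_left hMi1 hMi2,
        hu.2 (t + S) ht1, hu.2 S hS1]
    abel

end Controls

section Glue

variable {d m : ℕ} {τ S T : ℝ} (hτ : 0 < τ) (hS : 0 ≤ S) (hST : S ≤ T)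
  (h : -τ ≤ T) (h1 : -τ ≤ S) (h2 : -τ ≤ T - S)
  {b : Hist τ d → Vec d} {σ' : Hist τ d → Matrix (Fin d) (Fin m) ℝ}
  (hb : Continuous b) (hσ : Continuous σ')
  (x : Traj τ T d) {u₁ u₂ : ℝ → Vec m}

/-- a.e. equality of the glued control with `u₁` on `[0,S]`. -/
lemma glue_ae_left (u₁ u₂ : ℝ → Vec m) :
    (fun s => if s < S then u₁ s else u₂ (s - S)) =ᵐ[volume.restrict (Icc 0 S)] u₁ := by
  filter_upwards [ae_restrict_mem measurableSet_Icc, ae_ne_restrict (Icc 0 S) S] with s hs hne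
  rw [if_pos (lt_of_le_of_ne hs.2 hne)]

lemma glue_eqOn_right (u₁ u₂ : ℝ → Vec m) :
    EqOn (fun s => if s < S then u₁ s else u₂ (s - S)) (fun s => u₂ (s - S)) (Icc S T) :=
  fun s hs => by simp only [if_neg (not_lt.2 hs.1)]

include hS hST in
lemma glue_memLp (hu1 : MemLp u₁ 2 (volume.restrict (Icc 0 S)))
    (hu2 : MemLp u₂ 2 (volume.restrict (Icc 0 (T - S)))) :
    MemLp (fun s => if s < S then u₁ s else u₂ (s - S)) 2 (volume.restrict (Icc 0 T)) := by
  set u : ℝ → Vec m := fun s => if s < S then u₁ s else u₂ (s - S) with hudef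
  have m1 : MemLp u 2 (volume.restrict (Icc 0 S)) := hu1.ae_eq (glue_ae_left u₁ u₂).symm
  have m2 : MemLp u 2 (volume.restrict (Icc S T)) := by
    refine (memLp_unshift hu2).ae_eq ?_
    filter_upwards [ae_restrict_mem measurableSet_Icc] with s hs
    exact (glue_eqOn_right u₁ u₂ hs).symm
  have hle : volume.restrict (Icc 0 T)
      ≤ volume.restrict (Icc 0 S) + volume.restrict (Icc S T) := by
    refine le_trans ?_ (Measure.restrict_union_le _ _)
    rw [Icc_union_Icc_eq_Icc hS hST]
  have hmeas : AEStronglyMeasurable u (volume.restrict (Icc 0 T)) :=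
    (aestronglyMeasurable_add_measure_iff.2
      ⟨m1.aestronglyMeasurable, m2.aestronglyMeasurable⟩).mono_measure hle
  refine (memLp_two_iff_integrable_sq_norm hmeas).mpr ?_
  have : IntegrableOn (fun s => ‖u s‖^2) (Icc 0 S ∪ Icc S T) volume :=
    (integrableOn_sq_norm m1).union (integrableOn_sq_norm m2)
  rw [Icc_union_Icc_eq_Icc hS hST] at this
  exact this

include hτ hS hST hb hσ in
lemma controls_glue (hu1 : u₁ ∈ controls h1 b σ' (restrictTraj S hST x))
    (hu2 : u₂ ∈ controls h2 b σ' (shiftTraj h S x)) :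
    (fun s => if s < S then u₁ s else u₂ (s - S)) ∈ controls h b σ' x := by
  set u : ℝ → Vec m := fun s => if s < S then u₁ s else u₂ (s - S) with hudef
  have hA : Continuous fun s => σ' (seg h x s) := hσ.comp (continuous_seg h x)
  have hbc : Continuous fun s => b (seg h x s) := hb.comp (continuous_seg h x)
  have m1 : MemLp u 2 (volume.restrict (Icc 0 S)) := hu1.1.ae_eq (glue_ae_left u₁ u₂).symm
  have m2 : MemLp u 2 (volume.restrict (Icc S T)) := by
    refine (memLp_unshift hu2.1).ae_eq ?_
    filter_upwards [ae_restrict_mem measurableSet_Icc] with s hs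
    exact (glue_eqOn_right u₁ u₂ hs).symm
  refine ⟨glue_memLp hS hST hu1.1 hu2.1, ?_⟩
  have key : ∀ t ∈ Icc (0:ℝ) T, t ≤ S →
      ev h x t = ev h x 0 + (∫ s in (0:ℝ)..t, b (seg h x s)) +
        ∫ s in (0:ℝ)..t, matVec (σ' (seg h x s)) (u s) := by
    intro t ht htS
    have := hu1.2 t ⟨ht.1, htS⟩
    rw [ev_restrict hST h1 h x ⟨by linarith [ht.1], htS⟩,
        ev_restrict hST h1 h x ⟨by linarith, hS⟩] at this
    rw [this,
        show (∫ s in (0:ℝ)..t, b (seg h1 (restrictTraj S hST x) s))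
            = ∫ s in (0:ℝ)..t, b (seg h x s) from
          intervalIntegral.integral_congr fun s hs => by
            rw [uIcc_of_le ht.1] at hs
            rw [seg_restrict hτ hST h1 h x ⟨hs.1, hs.2.trans htS⟩]]
    congr 1
    refine intervalIntegral.integral_congr_ae ?_
    have hvol : ∀ᵐ s : ℝ ∂volume, s ≠ S := by
      rw [Filter.eventually_iff, mem_ae_iff]
      have : {x : ℝ | x ≠ S}ᶜ = {S} := by ext y; simp
      rw [this]; exact Real.volume_singleton
    filter_upwards [hvol] with s hne hsmem
    rw [uIoc_of_le ht.1] at hsmem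
    have hsS : s < S := lt_of_le_of_ne (hsmem.2.trans htS) hne
    rw [seg_restrict hτ hST h1 h x ⟨le_of_lt hsmem.1, hsmem.2.trans htS⟩]
    simp only [hudef, if_pos hsS]
  intro t ht
  rcases le_or_gt t S with htS | htS
  · exact key t ht htS
  · -- piece from the shifted control
    have ht2 : t - S ∈ Icc (0:ℝ) (T - S) := ⟨by linarith, by linarith [ht.2]⟩
    have step := hu2.2 (t - S) ht2
    rw [ev_shift hS hST h2 h x ⟨by linarith [ht2.1], ht2.2⟩,
        ev_shift hS hST h2 h x ⟨by linarith, by linarith [hST]⟩, add_zero,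
        show S + (t - S) = t from by ring,
        show (∫ s in (0:ℝ)..(t - S), b (seg h2 (shiftTraj h S x) s))
            = ∫ s in (0:ℝ)..(t - S), b (seg h x (s + S)) from
          intervalIntegral.integral_congr fun s hs => by
            rw [uIcc_of_le ht2.1] at hs
            rw [seg_shift hτ hS hST h2 h x ⟨hs.1, hs.2.trans ht2.2⟩, add_comm],
        show (∫ s in (0:ℝ)..(t - S), matVec (σ' (seg h2 (shiftTraj h S x) s)) (u₂ s))
            = ∫ s in (0:ℝ)..(t - S), matVec (σ' (seg h x (s + S))) (u (s + S)) from
          intervalIntegral.integral_congr fun s hs => by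
            rw [uIcc_of_le ht2.1] at hs
            rw [seg_shift hτ hS hST h2 h x ⟨hs.1, hs.2.trans ht2.2⟩, add_comm]
            congr 1
            simp only [hudef, if_neg (not_lt.2 (by linarith [hs.1] : S ≤ s + S)),
              add_sub_cancel_right],
        intervalIntegral.integral_comp_add_right (fun r => b (seg h x r)) S,
        intervalIntegral.integral_comp_add_right (fun r => matVec (σ' (seg h x r)) (u r)) S,
        zero_add, sub_add_cancel] at step
    have hbi1 : IntervalIntegrable (fun r => b (seg h x r)) volume 0 S :=
      hbc.intervalIntegrable _ _
    have hbi2 : IntervalIntegrable (fun r => b (seg h x r)) volume S t :=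
      hbc.intervalIntegrable _ _
    have hMi1 : IntervalIntegrable (fun r => matVec (σ' (seg h x r)) (u r)) volume 0 S :=
      intervalIntegrable_matVec _ hA m1 (by
        rw [uIoc_of_le hS]; exact Ioc_subset_Icc_self)
    have hMi2 : IntervalIntegrable (fun r => matVec (σ' (seg h x r)) (u r)) volume S t :=
      intervalIntegrable_matVec _ hA m2 (by
        rw [uIoc_of_le htS.le]
        exact Ioc_subset_Icc_self.trans (Icc_subset_Icc le_rfl ht.2))
    rw [← intervalIntegral.integral_add_adjacent_intervals hbi1 hbi2,
        ← intervalIntegral.integral_add_adjacent_intervals hMi1 hMi2,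
        step, key S ⟨hS, hST⟩ le_rfl]
    abel

end Glue

section Energy

variable {m : ℕ} {S T : ℝ}

lemma energy_split (hS : 0 ≤ S) (hST : S ≤ T) {u : ℝ → Vec m}
    (hu : MemLp u 2 (volume.restrict (Icc 0 T))) :
    (∫ s in (0:ℝ)..T, ‖u s‖^2)
      = (∫ s in (0:ℝ)..S, ‖u s‖^2) + ∫ s in (0:ℝ)..(T - S), ‖u (s + S)‖^2 := by
  have hi := integrableOn_sq_norm hu
  have i1 : IntervalIntegrable (fun s => ‖u s‖^2) volume 0 S := by
    rw [intervalIntegrable_iff]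
    refine hi.mono_set ?_
    rw [uIoc_of_le hS]
    exact Ioc_subset_Icc_self.trans (Icc_subset_Icc le_rfl hST)
  have i2 : IntervalIntegrable (fun s => ‖u s‖^2) volume S T := by
    rw [intervalIntegrable_iff]
    refine hi.mono_set ?_
    rw [uIoc_of_le hST]
    exact Ioc_subset_Icc_self.trans (Icc_subset_Icc hS le_rfl)
  rw [← intervalIntegral.integral_add_adjacent_intervals i1 i2]
  congr 1
  rw [intervalIntegral.integral_comp_add_right (fun s => ‖u s‖^2) S, zero_add, sub_add_cancel]

lemma energy_glue (hS : 0 ≤ S) (hST : S ≤ T) {u₁ u₂ : ℝ → Vec m}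
    (hu1 : MemLp u₁ 2 (volume.restrict (Icc 0 S)))
    (hu2 : MemLp u₂ 2 (volume.restrict (Icc 0 (T - S)))) :
    (∫ s in (0:ℝ)..T, ‖(if s < S then u₁ s else u₂ (s - S))‖^2)
      = (∫ s in (0:ℝ)..S, ‖u₁ s‖^2) + ∫ s in (0:ℝ)..(T - S), ‖u₂ s‖^2 := by
  set u : ℝ → Vec m := fun s => if s < S then u₁ s else u₂ (s - S) with hudef
  rw [energy_split hS hST (glue_memLp hS hST hu1 hu2)]
  congr 1
  · refine intervalIntegral.integral_congr_ae ?_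
    have hvol : ∀ᵐ s : ℝ ∂volume, s ≠ S := by
      rw [Filter.eventually_iff, mem_ae_iff]
      have : {x : ℝ | x ≠ S}ᶜ = {S} := by ext y; simp
      rw [this]; exact Real.volume_singleton
    filter_upwards [hvol] with s hne hsmem
    rw [uIoc_of_le hS] at hsmem
    rw [if_pos (lt_of_le_of_ne hsmem.2 hne)]
  · refine intervalIntegral.integral_congr fun s hs => ?_
    rw [uIcc_of_le (by linarith : (0:ℝ) ≤ T - S)] at hs
    rw [if_neg (not_lt.2 (by linarith [hs.1] : S ≤ s + S)), add_sub_cancel_right]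

end Energy

set_option maxHeartbeats 1000000
/-- Lemma 4.1: `I_T(x) = I_S(x|_{[-τ,S]}) + I_{T-S}(x^S)`. -/
theorem stmt_0 {d m : ℕ} (hd : 0 < d) (hm : 0 < m) {τ S T : ℝ} (hτ : 0 < τ)
    (hS : 0 ≤ S) (hST : S < T)
    (b : Hist τ d → Vec d) (σ' : Hist τ d → Matrix (Fin d) (Fin m) ℝ)
    (hb : Continuous b) (hσ : Continuous σ')
    (x : Traj τ T d) :
    rate (by linarith) b σ' x
      = rate (by linarith) b σ' (restrictTraj S hST.le x)
        + rate (by linarith) b σ' (shiftTraj (by linarith) S x) := by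
  have h : -τ ≤ T := by linarith
  have h1 : -τ ≤ S := by linarith
  have h2 : -τ ≤ T - S := by linarith
  have hST' : S ≤ T := hST.le
  apply le_antisymm
  · -- `I_T ≤ I_S + I_{T-S}` via gluing controls
    rw [rate, rate, rate]
    simp only [ENNReal.iInf_add, ENNReal.add_iInf]
    refine le_iInf fun u₂ => le_iInf fun hu2 => le_iInf fun u₁ => le_iInf fun hu1 => ?_
    have hglue := controls_glue hτ hS hST' h h1 h2 hb hσ x hu1 hu2
    refine le_trans (iInf₂_le _ hglue) (le_of_eq ?_)
    have e1 : (0:ℝ) ≤ ∫ s in (0:ℝ)..S, ‖u₁ s‖^2 :=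
      intervalIntegral.integral_nonneg hS (fun s _ => by positivity)
    have e2 : (0:ℝ) ≤ ∫ s in (0:ℝ)..(T - S), ‖u₂ s‖^2 :=
      intervalIntegral.integral_nonneg (by linarith) (fun s _ => by positivity)
    rw [energy_glue hS hST' hu1.1 hu2.1, mul_add, ENNReal.ofReal_add (by linarith) (by linarith)]
  · -- `I_S + I_{T-S} ≤ I_T` via restriction/shift of controls
    rw [rate]
    refine le_iInf fun u => le_iInf fun hu => ?_
    have hr := controls_restrict hτ hS hST' h h1 x hu
    have hs := controls_shift hτ hS hST' h h2 hb hσ x hu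
    have e1 : (0:ℝ) ≤ ∫ s in (0:ℝ)..S, ‖u s‖^2 :=
      intervalIntegral.integral_nonneg hS (fun s _ => by positivity)
    have e2 : (0:ℝ) ≤ ∫ s in (0:ℝ)..(T - S), ‖u (s + S)‖^2 :=
      intervalIntegral.integral_nonneg (by linarith) (fun s _ => by positivity)
    calc rate h1 b σ' (restrictTraj S hST.le x) + rate h2 b σ' (shiftTraj h S x)
        ≤ ENNReal.ofReal ((1/2) * ∫ s in (0:ℝ)..S, ‖u s‖ ^ 2)
          + ENNReal.ofReal ((1/2) * ∫ s in (0:ℝ)..(T - S), ‖u (s + S)‖ ^ 2) :=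
          add_le_add (iInf₂_le u hr) (iInf₂_le _ hs)
      _ = ENNReal.ofReal ((1/2) * ∫ s in (0:ℝ)..T, ‖u s‖ ^ 2) := by
          rw [← ENNReal.ofReal_add (by linarith) (by linarith),
            energy_split hS hST' hu.1, mul_add]
end
end

section
/- Suppose m = d, b and σ satisfy the Lipschitz assumption, and a = σσ' is uniformly elliptic. Let x* be a periodic solution of the DDE with period p > 0 and orbit 𝐎 = {x*_t : t ∈ [0,p)} ⊂ 𝐂. Then for every α > 0 there exist constants μ, T₁ > 0 such that for every φ in the closure of 𝐁(𝐎,μ) and every ψ ∈ 𝐎, there exist T ≤ T₁ and x ∈ C([-τ,T],ℝ^d) with x₀ = φ, x_T = ψ and I_T(x) ≤ α. -/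
open MeasureTheory Set Metric
open scoped ENNReal

noncomputable section

/-- The history segment `x_t ∈ 𝐂` of a function `x ∈ C(ℝ,ℝ^d)` (used for functions on
`[-τ,∞)`, extended continuously to `ℝ`). -/
def segF {d : ℕ} (τ : ℝ) (x : C(ℝ, Vec d)) (t : ℝ) : Hist τ d :=
  ⟨fun s => x (t + s.1), x.continuous.comp <| continuous_const.add continuous_subtype_val⟩

/-- `x` is a solution of the DDE `x(t) = x(0) + ∫₀ᵗ b(x_s) ds`, `t ≥ 0`. -/
def IsDDESol {d : ℕ} (τ : ℝ) (b : Hist τ d → Vec d) (x : C(ℝ, Vec d)) : Prop :=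
  ∀ t : ℝ, 0 ≤ t → x t = x 0 + ∫ s in (0:ℝ)..t, b (segF τ x s)

/-- `x` is a periodic solution of the DDE with period `p`. -/
def IsPeriodicSol {d : ℕ} (τ : ℝ) (b : Hist τ d → Vec d) (x : C(ℝ, Vec d)) (p : ℝ) : Prop :=
  IsDDESol τ b x ∧ 0 < p ∧ ∀ t : ℝ, -τ ≤ t → x (t + p) = x t

/-- The orbit `𝐎 = {x*_t : t ∈ [0,p)} ⊂ 𝐂` of a periodic solution. -/
def orbit {d : ℕ} (τ : ℝ) (x : C(ℝ, Vec d)) (p : ℝ) : Set (Hist τ d) :=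
  (segF τ x) '' Ico 0 p

/-- Uniform ellipticity of `a = σσ'`: `ν' a(φ) ν ≥ c |ν|²`. -/
def UnifElliptic {d : ℕ} {τ : ℝ} (σ' : Hist τ d → Matrix (Fin d) (Fin d) ℝ) (c : ℝ) : Prop :=
  ∀ (φ : Hist τ d) (ν : Fin d → ℝ),
    c * (∑ i, ν i ^ 2) ≤ dotProduct ν ((σ' φ * Matrix.transpose (σ' φ)).mulVec ν)


/-! ### Auxiliary lemmas -/

open Matrix in
lemma posdef_of_ellip {d : ℕ} {c : ℝ} (hc : 0 < c) (M : Matrix (Fin d) (Fin d) ℝ)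
    (hM : ∀ ν : Fin d → ℝ, c * (∑ i, ν i ^ 2) ≤ dotProduct ν ((M * M.transpose).mulVec ν)) :
    (M * M.transpose).PosDef := by
  refine Matrix.PosDef.of_dotProduct_mulVec_pos ?_ ?_
  · simpa [Matrix.conjTranspose_eq_transpose_of_trivial] using
      Matrix.isHermitian_mul_conjTranspose_self M
  · intro x hx
    have h1 : 0 < ∑ i, x i ^ 2 := by
      obtain ⟨i, hi⟩ := Function.ne_iff.mp hx
      exact Finset.sum_pos' (fun j _ => sq_nonneg _)
        ⟨i, Finset.mem_univ i, by apply sq_pos_of_ne_zero; exact hi⟩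
    calc (0:ℝ) < c * ∑ i, x i ^ 2 := mul_pos hc h1
    _ ≤ _ := hM x
    _ = dotProduct (star x) ((M * M.transpose) *ᵥ x) := by simp [star_trivial]

open Matrix in
lemma ellip_solve {d : ℕ} {c : ℝ} (hc : 0 < c) (M : Matrix (Fin d) (Fin d) ℝ)
    (hM : ∀ ν : Fin d → ℝ, c * (∑ i, ν i ^ 2) ≤ dotProduct ν ((M * M.transpose).mulVec ν))
    (g : Fin d → ℝ) :
    M.mulVec (M.transpose.mulVec ((M * M.transpose)⁻¹.mulVec g)) = g ∧
      ∑ i, (M.transpose.mulVec ((M * M.transpose)⁻¹.mulVec g)) i ^ 2 ≤ (∑ i, g i ^ 2) / c := by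
  set A := M * M.transpose with hA
  have hpd := posdef_of_ellip hc M hM
  have hdet : IsUnit A.det := hpd.det_pos.ne'.isUnit
  set ν := A⁻¹.mulVec g with hν
  have hAν : A.mulVec ν = g := by
    rw [hν, Matrix.mulVec_mulVec, Matrix.mul_nonsing_inv _ hdet, Matrix.one_mulVec]
  set w := M.transpose.mulVec ν with hw
  have hMw : M.mulVec w = g := by
    rw [hw, Matrix.mulVec_mulVec, ← hA, hAν]
  refine ⟨hMw, ?_⟩
  have hww : ∑ i, w i ^ 2 = dotProduct g ν := by
    have h0 : ∑ i, w i ^ 2 = dotProduct w w := by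
      simp [dotProduct, sq]
    rw [h0]
    nth_rewrite 2 [hw]
    rw [dotProduct_mulVec, Matrix.vecMul_transpose, hMw]
  have hS : c * (∑ i, ν i ^ 2) ≤ dotProduct g ν := by
    have h2 := hM ν
    rwa [hAν, dotProduct_comm] at h2
  have hCS : (dotProduct g ν) ^ 2 ≤ (∑ i, ν i ^ 2) * (∑ i, g i ^ 2) := by
    have h3 := Finset.sum_mul_sq_le_sq_mul_sq Finset.univ ν g
    calc (dotProduct g ν) ^ 2 = (∑ i, ν i * g i) ^ 2 := by
          rw [dotProduct_comm]; rfl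
      _ ≤ _ := h3
  rw [hww]
  set S := dotProduct g ν with hSdef
  have hν2 : 0 ≤ ∑ i, ν i ^ 2 := Finset.sum_nonneg fun i _ => sq_nonneg _
  have hg2 : 0 ≤ ∑ i, g i ^ 2 := Finset.sum_nonneg fun i _ => sq_nonneg _
  have hS0 : 0 ≤ S := le_trans (by positivity) hS
  rcases eq_or_lt_of_le hS0 with h | h
  · rw [← h]; positivity
  · rw [le_div_iff₀ hc]
    nlinarith [sq_nonneg S]

lemma continuous_segF {d : ℕ} (τ : ℝ) (x : C(ℝ, Vec d)) : Continuous fun t => segF τ x t := by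
  have h : (fun t => segF τ x t) =
      (ContinuousMap.curry (x.comp ⟨fun q : ℝ × Icc (-τ) (0:ℝ) => q.1 + q.2.1,
        by fun_prop⟩) : C(ℝ, C(Icc (-τ) (0:ℝ), Vec d))) := by
    funext t; ext s; rfl
  rw [h]; exact (ContinuousMap.curry _).continuous

lemma vec_normSq {d : ℕ} (v : Vec d) : ‖v‖ ^ 2 = ∑ i, v i ^ 2 := by
  rw [EuclideanSpace.norm_eq, Real.sq_sqrt (by positivity)]
  simp [sq_abs]

lemma matVec_def {d m : ℕ} (M : Matrix (Fin d) (Fin m) ℝ) (v : Vec m) :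
    matVec M v = (M.mulVec (fun j => v j) : Fin d → ℝ) := rfl

lemma ae_ne_one : ∀ᵐ s : ℝ, s ≠ (1:ℝ) := by
  rw [MeasureTheory.ae_iff]
  have h : {a : ℝ | ¬ a ≠ 1} = {(1:ℝ)} := by ext a; simp
  rw [h, Real.volume_singleton]

lemma intervalIntegrable_indicator_cont {E : Type*} [NormedAddCommGroup E]
    {f : ℝ → E} (hf : Continuous f) {s : Set ℝ} (hs : MeasurableSet s) (a b : ℝ) :
    IntervalIntegrable (s.indicator f) volume a b := by
  constructor <;>
    exact ((hf.integrableOn_Icc).mono_set Set.Ioc_subset_Icc_self).indicator hs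

lemma indicator_integral {E : Type*} [NormedAddCommGroup E] [NormedSpace ℝ E] [CompleteSpace E]
    (e : E) {t : ℝ} (ht : 0 ≤ t) :
    ∫ s in (0:ℝ)..t, (Iio (1:ℝ)).indicator (fun _ => e) s = (min t 1) • e := by
  have hii : ∀ a b : ℝ, IntervalIntegrable ((Iio (1:ℝ)).indicator (fun _ => e)) volume a b :=
    fun a b => intervalIntegrable_indicator_cont continuous_const measurableSet_Iio a b
  rcases le_or_gt t 1 with h | h
  · rw [min_eq_left h]
    have h4 : ∫ s in (0:ℝ)..t, (Iio (1:ℝ)).indicator (fun _ => e) s = ∫ s in (0:ℝ)..t, e := by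
      apply intervalIntegral.integral_congr_ae
      filter_upwards [ae_ne_one] with s hs1 hs
      rw [Set.uIoc_of_le ht] at hs
      exact Set.indicator_of_mem (Set.mem_Iio.mpr (lt_of_le_of_ne (hs.2.trans h) hs1)) _
    rw [h4, intervalIntegral.integral_const, sub_zero]
  · rw [min_eq_right h.le]
    rw [← intervalIntegral.integral_add_adjacent_intervals (hii 0 1) (hii 1 t)]
    have h1 : ∫ s in (0:ℝ)..1, (Iio (1:ℝ)).indicator (fun _ => e) s = e := by
      have h4 : ∫ s in (0:ℝ)..1, (Iio (1:ℝ)).indicator (fun _ => e) s = ∫ s in (0:ℝ)..1, e := by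
        apply intervalIntegral.integral_congr_ae
        filter_upwards [ae_ne_one] with s hs1 hs
        rw [Set.uIoc_of_le zero_le_one] at hs
        exact Set.indicator_of_mem (Set.mem_Iio.mpr (lt_of_le_of_ne hs.2 hs1)) _
      rw [h4, intervalIntegral.integral_const, sub_zero, one_smul]
    have h2 : ∫ s in (1:ℝ)..t, (Iio (1:ℝ)).indicator (fun _ => e) s = 0 := by
      have h4 : ∫ s in (1:ℝ)..t, (Iio (1:ℝ)).indicator (fun _ => e) s =
          ∫ s in (1:ℝ)..t, (0:E) := by
        apply intervalIntegral.integral_congr_ae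
        filter_upwards [] with s hs
        rw [Set.uIoc_of_le h.le] at hs
        exact Set.indicator_of_notMem (by simpa using hs.1.le) _
      rw [h4, intervalIntegral.integral_zero]
    rw [h1, h2, add_zero, one_smul]

lemma frobSq_nonneg {d m : ℕ} (M : Matrix (Fin d) (Fin m) ℝ) : 0 ≤ frobSq M :=
  Finset.sum_nonneg fun i _ => Finset.sum_nonneg fun j _ => sq_nonneg _

section lip
variable {d m : ℕ} {τ : ℝ} {b : Hist τ d → Vec d}
  {σ' : Hist τ d → Matrix (Fin d) (Fin m) ℝ} {κ₁ : ℝ}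

lemma lip_b (hl : LipCoeff b σ' κ₁) (hκ : 0 ≤ κ₁) (φ ψ : Hist τ d) :
    ‖b φ - b ψ‖ ≤ Real.sqrt κ₁ * ‖φ - ψ‖ := by
  have h1 : ‖b φ - b ψ‖ ^ 2 ≤ κ₁ * ‖φ - ψ‖ ^ 2 :=
    le_trans (le_add_of_nonneg_right (frobSq_nonneg _)) (hl φ ψ)
  have h2 := Real.sqrt_le_sqrt h1
  rwa [Real.sqrt_sq (norm_nonneg _), Real.sqrt_mul hκ, Real.sqrt_sq (norm_nonneg _)] at h2

lemma cont_b (hl : LipCoeff b σ' κ₁) (hκ : 0 ≤ κ₁) : Continuous b := by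
  refine (LipschitzWith.of_dist_le_mul (K := Real.toNNReal (Real.sqrt κ₁)) ?_).continuous
  intro φ ψ
  rw [dist_eq_norm, dist_eq_norm, Real.coe_toNNReal _ (Real.sqrt_nonneg _)]
  exact lip_b hl hκ φ ψ

lemma lip_entry (hl : LipCoeff b σ' κ₁) (hκ : 0 ≤ κ₁) (φ ψ : Hist τ d) (i : Fin d) (j : Fin m) :
    |σ' φ i j - σ' ψ i j| ≤ Real.sqrt κ₁ * ‖φ - ψ‖ := by
  have h0 : (σ' φ i j - σ' ψ i j) ^ 2 ≤ frobSq (σ' φ - σ' ψ) := by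
    have h1 : ∀ i : Fin d, (0:ℝ) ≤ ∑ j, ((σ' φ - σ' ψ) i j) ^ 2 :=
      fun i => Finset.sum_nonneg fun j _ => sq_nonneg _
    calc (σ' φ i j - σ' ψ i j) ^ 2 = ((σ' φ - σ' ψ) i j) ^ 2 := by
          simp [Matrix.sub_apply]
      _ ≤ ∑ j, ((σ' φ - σ' ψ) i j) ^ 2 :=
          Finset.single_le_sum (f := fun j => ((σ' φ - σ' ψ) i j) ^ 2)
            (fun j _ => sq_nonneg _) (Finset.mem_univ j)
      _ ≤ frobSq (σ' φ - σ' ψ) :=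
          Finset.single_le_sum (f := fun i => ∑ j, ((σ' φ - σ' ψ) i j) ^ 2)
            (fun i _ => h1 i) (Finset.mem_univ i)
  have h1 : (σ' φ i j - σ' ψ i j) ^ 2 ≤ κ₁ * ‖φ - ψ‖ ^ 2 :=
    le_trans h0 (le_trans (le_add_of_nonneg_left (sq_nonneg _)) (hl φ ψ))
  have h2 := Real.sqrt_le_sqrt h1
  rwa [Real.sqrt_sq_eq_abs, Real.sqrt_mul hκ, Real.sqrt_sq (norm_nonneg _)] at h2

lemma cont_σ (hl : LipCoeff b σ' κ₁) (hκ : 0 ≤ κ₁) : Continuous σ' := by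
  refine continuous_pi fun i => continuous_pi fun j => ?_
  refine (LipschitzWith.of_dist_le_mul (K := Real.toNNReal (Real.sqrt κ₁)) ?_).continuous
  intro φ ψ
  rw [Real.dist_eq, dist_eq_norm, Real.coe_toNNReal _ (Real.sqrt_nonneg _)]
  exact lip_entry hl hκ φ ψ i j
end lip

lemma cont_inv {X : Type*} [TopologicalSpace X] {n : ℕ} {A : X → Matrix (Fin n) (Fin n) ℝ}
    (hA : Continuous A) (hdet : ∀ x, ((A x).det) ≠ 0) : Continuous fun x => (A x)⁻¹ := by
  have h : (fun x => (A x)⁻¹) = fun x => ((A x).det)⁻¹ • (A x).adjugate := by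
    funext x
    rw [Matrix.inv_def, Ring.inverse_eq_inv']
  rw [h]
  exact (hA.matrix_det.inv₀ hdet).smul hA.matrix_adjugate

lemma cont_matVec {X : Type*} [TopologicalSpace X] {d m : ℕ}
    {P : X → Matrix (Fin d) (Fin m) ℝ} {v : X → Vec m}
    (hP : Continuous P) (hv : Continuous v) :
    Continuous fun x => (matVec (P x) (v x) : Vec d) := by
  have hpi : Continuous fun x => (fun i => ∑ j, P x i j * v x j : Fin d → ℝ) := by
    refine continuous_pi fun i => ?_
    refine continuous_finset_sum _ fun j _ => ?_
    have hPij : Continuous fun x => P x i j :=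
      (continuous_apply j).comp ((continuous_apply i).comp hP)
    have hvj : Continuous fun x => v x j := by
      have := (PiLp.continuous_ofLp 2 (fun _ : Fin m => ℝ)).comp hv
      exact (continuous_apply j).comp this
    exact hPij.mul hvj
  exact (PiLp.continuous_toLp 2 (fun _ : Fin d => ℝ)).comp hpi

lemma per_iter {d : ℕ} (xs : C(ℝ, Vec d)) {τ p : ℝ} (hp : 0 ≤ p)
    (hper : ∀ t : ℝ, -τ ≤ t → xs (t + p) = xs t) :
    ∀ n : ℕ, ∀ t : ℝ, -τ ≤ t → xs (t + n * p) = xs t := by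
  intro n
  induction n with
  | zero => simp
  | succ k ih =>
    intro t ht
    have h1 : t + ((k:ℕ)+1 : ℕ) * p = (t + k * p) + p := by push_cast; ring
    have h2 : (0:ℝ) ≤ (k:ℝ) * p := by positivity
    rw [h1, hper _ (by linarith), ih t ht]

/-- The decay profile. -/
def ρfun : ℝ → ℝ := fun t => max 0 (1 - max t 0)

lemma ρfun_nonneg (t : ℝ) : 0 ≤ ρfun t := le_max_left _ _
lemma ρfun_le_one (t : ℝ) : ρfun t ≤ 1 :=
  max_le zero_le_one (by have := le_max_right t 0; linarith)
lemma ρfun_of_nonpos {t : ℝ} (ht : t ≤ 0) : ρfun t = 1 := by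
  simp [ρfun, max_eq_right ht]
lemma ρfun_of_nonneg {t : ℝ} (ht : 0 ≤ t) : ρfun t = 1 - min t 1 := by
  simp only [ρfun, max_eq_left ht]
  rcases le_or_gt t 1 with h | h
  · rw [min_eq_left h, max_eq_right (by linarith)]
  · rw [min_eq_right h.le, max_eq_left (by linarith)]; norm_num
lemma ρfun_of_ge_one {t : ℝ} (ht : 1 ≤ t) : ρfun t = 0 := by
  rw [ρfun_of_nonneg (by linarith), min_eq_right ht]; ring
lemma ρfun_continuous : Continuous ρfun :=
  continuous_const.max ((continuous_const.sub (continuous_id.max continuous_const)))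

section path
variable {d : ℕ} {τ : ℝ} (hτ : 0 ≤ τ) (φ : Hist τ d) (xs : C(ℝ, Vec d)) (r : ℝ)

/-- The correction term. -/
def wf : ℝ → Vec d := fun t =>
  (φ - segF τ xs r) (projIcc (-τ) 0 (neg_nonpos.mpr hτ) (min t 0))

lemma wf_cont : Continuous (wf hτ φ xs r) :=
  (φ - segF τ xs r).continuous.comp
    (continuous_projIcc.comp (continuous_id.min continuous_const))

lemma wf_norm_le {μ : ℝ} (hd : dist φ (segF τ xs r) ≤ μ) (t : ℝ) :
    ‖wf hτ φ xs r t‖ ≤ μ := by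
  refine le_trans (ContinuousMap.norm_coe_le_norm _ _) ?_
  rwa [dist_eq_norm] at hd

lemma wf_of_nonneg {t : ℝ} (ht : 0 ≤ t) : wf hτ φ xs r t = wf hτ φ xs r 0 := by
  unfold wf
  rw [min_eq_right ht, min_self]

/-- The connecting path. -/
def Xf : ℝ → Vec d := fun t => xs (t + r) + ρfun t • wf hτ φ xs r t

lemma Xf_cont : Continuous (Xf hτ φ xs r) :=
  (xs.continuous.comp (continuous_id.add continuous_const)).add
    (ρfun_continuous.smul (wf_cont hτ φ xs r))

lemma Xf_hist {t : ℝ} (ht : t ∈ Icc (-τ) 0) : Xf hτ φ xs r t = φ ⟨t, ht⟩ := by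
  unfold Xf wf
  rw [ρfun_of_nonpos ht.2, one_smul, min_eq_left ht.2, projIcc_of_mem _ ht]
  simp only [ContinuousMap.sub_apply, segF, ContinuousMap.coe_mk]
  rw [add_comm r t]
  abel
end path
lemma matVec_add {d m : ℕ} (M : Matrix (Fin d) (Fin m) ℝ) (v w : Vec m) :
    matVec M (v + w) = matVec M v + matVec M w := by
  ext i
  show (∑ j, M i j * (v + w) j) = (∑ j, M i j * v j) + ∑ j, M i j * w j
  rw [← Finset.sum_add_distrib]
  refine Finset.sum_congr rfl fun j _ => ?_
  show M i j * (v j + w j) = _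
  ring

lemma dde_shift {d : ℕ} {τ : ℝ} {b : Hist τ d → Vec d} (xs : C(ℝ, Vec d))
    (hdde : IsDDESol τ b xs) (hbc : Continuous b) {r t : ℝ} (hr : 0 ≤ r) (ht : 0 ≤ t) :
    ∫ s in (0:ℝ)..t, b (segF τ xs (s + r)) = xs (t + r) - xs r := by
  have hint : ∀ a b' : ℝ, IntervalIntegrable (fun s => b (segF τ xs s)) volume a b' :=
    fun a b' => (hbc.comp (continuous_segF τ xs)).intervalIntegrable a b'
  have hcomp : ∫ s in (0:ℝ)..t, b (segF τ xs (s + r)) = ∫ s in r..(t + r), b (segF τ xs s) := by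
    have h := intervalIntegral.integral_comp_add_right (a := 0) (b := t)
      (fun s => b (segF τ xs s)) r
    rwa [zero_add] at h
  rw [hcomp]
  have h1 := intervalIntegral.integral_add_adjacent_intervals (hint 0 r) (hint r (t + r))
  have e1 := hdde r hr
  have e2 := hdde (t + r) (by linarith)
  have h2 : ∫ s in r..(t+r), b (segF τ xs s) =
      (∫ s in (0:ℝ)..(t+r), b (segF τ xs s)) - ∫ s in (0:ℝ)..r, b (segF τ xs s) := by
    rw [← h1]; abel
  have e1' : ∫ s in (0:ℝ)..r, b (segF τ xs s) = xs r - xs 0 := by rw [e1]; abel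
  have e2' : ∫ s in (0:ℝ)..(t+r), b (segF τ xs s) = xs (t + r) - xs 0 := by rw [e2]; abel
  rw [h2, e1', e2']; abel
/-- Lemma 6.1: paths of small energy connecting a neighborhood of the orbit
to the orbit, in bounded time. -/
theorem stmt_9 {d : ℕ} (hd : 0 < d) {τ : ℝ} (hτ : 0 < τ)
    (b : Hist τ d → Vec d) (σ' : Hist τ d → Matrix (Fin d) (Fin d) ℝ)
    {κ₁ : ℝ} (hκ₁ : 0 < κ₁) (hlip : LipCoeff b σ' κ₁)
    {c : ℝ} (hc : 0 < c) (hell : UnifElliptic σ' c)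
    (xs : C(ℝ, Vec d)) (p : ℝ) (hxs : IsPeriodicSol τ b xs p)
    (α : ℝ) (hα : 0 < α) :
    ∃ μ : ℝ, 0 < μ ∧ ∃ T₁ : ℝ, 0 < T₁ ∧
      ∀ φ : Hist τ d, infDist φ (orbit τ xs p) ≤ μ →
        ∀ ψ ∈ orbit τ xs p,
          ∃ T : ℝ, 0 < T ∧ T ≤ T₁ ∧ ∃ (h : -τ ≤ T) (x : Traj τ T d),
            seg h x 0 = φ ∧ seg h x T = ψ ∧ rate h b σ' x ≤ ENNReal.ofReal α := by
  obtain ⟨hdde, hp, hper⟩ := hxs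
  have hτ0 : (0:ℝ) ≤ τ := hτ.le
  have hbcont : Continuous b := cont_b hlip hκ₁.le
  have hσcont : Continuous σ' := cont_σ hlip hκ₁.le
  -- constants
  set n : ℕ := ⌈(1 + τ + p) / p⌉₊ with hn
  have hnp : 1 + τ + p ≤ (n:ℝ) * p := by
    have h1 : (1 + τ + p) / p ≤ (n:ℝ) := Nat.le_ceil _
    calc 1 + τ + p = ((1 + τ + p)/p) * p := (div_mul_cancel₀ _ hp.ne').symm
    _ ≤ (n:ℝ) * p := mul_le_mul_of_nonneg_right h1 hp.le
  set T₁ : ℝ := (n:ℝ) * p + p with hT₁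
  have hT₁pos : 0 < T₁ := by nlinarith
  set Cκ : ℝ := Real.sqrt κ₁ + 1 with hCκ
  have hCκpos : 0 < Cκ := by positivity
  set μ : ℝ := Real.sqrt (2 * c * α / (Cκ^2 * T₁)) with hμ
  have hμpos : 0 < μ := Real.sqrt_pos.mpr (by positivity)
  have hμsq : μ^2 = 2 * c * α / (Cκ^2 * T₁) := Real.sq_sqrt (by positivity)
  refine ⟨μ, hμpos, T₁, hT₁pos, ?_⟩
  intro φ hφ ψ hψ
  obtain ⟨t₀, ht₀, rfl⟩ := hψ
  -- nearest point on the orbit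
  have hsegxs : Continuous fun t => segF τ xs t := continuous_segF τ xs
  obtain ⟨r, hr, hrdist⟩ : ∃ r ∈ Icc (0:ℝ) p, dist φ (segF τ xs r) ≤ μ := by
    have hKc : IsCompact (segF τ xs '' Icc (0:ℝ) p) := (isCompact_Icc).image hsegxs
    have hKne : (segF τ xs '' Icc (0:ℝ) p).Nonempty := ⟨_, ⟨0, ⟨le_refl 0, hp.le⟩, rfl⟩⟩
    obtain ⟨y, hyK, hy⟩ := hKc.exists_infDist_eq_dist hKne φ
    obtain ⟨r, hrm, rfl⟩ := hyK
    refine ⟨r, hrm, ?_⟩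
    rw [← hy]
    refine le_trans (le_trans (Metric.infDist_le_infDist_of_subset ?_ ?_) hφ) le_rfl
    · exact Set.image_mono Ico_subset_Icc_self
    · exact ⟨_, ⟨0, ⟨le_refl 0, hp⟩, rfl⟩⟩
  set T : ℝ := t₀ - r + (n:ℝ) * p with hT
  have hT1τ : 1 + τ ≤ T := by
    have h1 := ht₀.1; have h2 := hr.2
    rw [hT]; linarith
  have hT0 : 0 < T := by linarith
  have hTle : T ≤ T₁ := by
    have h1 := ht₀.2; have h2 := hr.1
    rw [hT, hT₁]; linarith
  have hτT : -τ ≤ T := by linarith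
  -- the path
  set X : ℝ → Vec d := Xf hτ0 φ xs r with hX
  have hXcont : Continuous X := Xf_cont hτ0 φ xs r
  set Xc : C(ℝ, Vec d) := ⟨X, hXcont⟩ with hXc
  set x : Traj τ T d := ⟨fun s => X s.1, hXcont.comp continuous_subtype_val⟩ with hx
  have hXval : ∀ t : ℝ, X t = xs (t + r) + ρfun t • wf hτ0 φ xs r t := fun t => rfl
  refine ⟨T, hT0, hTle, hτT, x, ?_, ?_, ?_⟩
  · -- seg hτT x 0 = φ
    refine ContinuousMap.ext fun q => ?_
    have hq0 : (0:ℝ) + q.1 ∈ Icc (-τ) T := by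
      constructor
      · have := q.2.1; linarith
      · have := q.2.2; linarith
    show x (projIcc (-τ) T hτT (0 + q.1)) = φ q
    rw [projIcc_of_mem hτT hq0]
    show X (0 + q.1) = φ q
    rw [zero_add, hX, Xf_hist hτ0 φ xs r q.2]
  · -- seg hτT x T = segF τ xs t₀
    refine ContinuousMap.ext fun q => ?_
    have hq : T + q.1 ∈ Icc (-τ) T := by
      constructor
      · have := q.2.1; linarith
      · have := q.2.2; linarith
    show x (projIcc (-τ) T hτT (T + q.1)) = xs (t₀ + q.1)
    rw [projIcc_of_mem hτT hq]
    show X (T + q.1) = xs (t₀ + q.1)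
    rw [hXval]
    rw [ρfun_of_ge_one (by have := q.2.1; linarith), zero_smul, add_zero]
    have harg : (T + q.1) + r = (t₀ + q.1) + (n:ℝ) * p := by rw [hT]; ring
    rw [harg, per_iter xs hp.le hper n _ (by have := q.2.1; have := ht₀.1; linarith)]
  · -- rate bound
    have hsegXc : Continuous fun s => segF τ Xc s := continuous_segF τ Xc
    set M : ℝ → Matrix (Fin d) (Fin d) ℝ := fun s => σ' (segF τ Xc s) with hM
    have hMcont : Continuous M := hσcont.comp hsegXc
    have hdet : ∀ s, ((M s) * (M s).transpose).det ≠ 0 :=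
      fun s => (posdef_of_ellip hc (M s) (hell _)).det_pos.ne'
    set P : ℝ → Matrix (Fin d) (Fin d) ℝ :=
      fun s => (M s).transpose * ((M s) * (M s).transpose)⁻¹ with hP
    have hPcont : Continuous P :=
      hMcont.matrix_transpose.matrix_mul
        (cont_inv (hMcont.matrix_mul hMcont.matrix_transpose) hdet)
    set e : Vec d := wf hτ0 φ xs r 0 with he
    set b₁ : ℝ → Vec d := fun s => b (segF τ xs (s + r)) with hb₁
    set b₂ : ℝ → Vec d := fun s => b (segF τ Xc s) with hb₂
    set D : ℝ → Vec d := (Iio (1:ℝ)).indicator (fun _ => -e) with hD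
    set g : ℝ → Vec d := fun s => b₁ s - b₂ s + D s with hg
    set u₁ : ℝ → Vec d := fun s => matVec (P s) (b₁ s - b₂ s) with hu₁
    set u₂ : ℝ → Vec d := fun s => matVec (P s) (-e) with hu₂
    have hb₁cont : Continuous b₁ :=
      hbcont.comp (hsegxs.comp (continuous_id.add continuous_const))
    have hb₂cont : Continuous b₂ := hbcont.comp hsegXc
    have hu₁cont : Continuous u₁ := cont_matVec hPcont (hb₁cont.sub hb₂cont)
    have hu₂cont : Continuous u₂ := cont_matVec hPcont continuous_const
    have hDlt : ∀ s : ℝ, s < 1 → D s = -e :=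
      fun s h => Set.indicator_of_mem (Set.mem_Iio.mpr h) _
    have hDge : ∀ s : ℝ, 1 ≤ s → D s = 0 :=
      fun s h => Set.indicator_of_notMem (by simpa using h) _
    set u : ℝ → Vec d := fun s => u₁ s + (Iio (1:ℝ)).indicator u₂ s with hu
    have hu_eq : ∀ s, u s = matVec (P s) (g s) := by
      intro s
      show u₁ s + (Iio (1:ℝ)).indicator u₂ s = matVec (P s) (b₁ s - b₂ s + D s)
      rcases lt_or_ge s 1 with h | h
      · rw [Set.indicator_of_mem (Set.mem_Iio.mpr h), hDlt s h, matVec_add]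
      · rw [Set.indicator_of_notMem (by simpa using h), hDge s h, add_zero, add_zero]
    -- key pointwise identities from ellipticity
    have hkey : ∀ s, matVec (M s) (u s) = g s := by
      intro s
      have h1 := (ellip_solve hc (M s) (hell (segF τ Xc s)) (fun j => g s j)).1
      rw [hu_eq s]
      show matVec (M s) (matVec (P s) (g s)) = g s
      apply WithLp.ofLp_injective
      rw [matVec_def, matVec_def]
      have h2 : ((M s).transpose * ((M s) * (M s).transpose)⁻¹).mulVec (fun j => g s j)
          = (M s).transpose.mulVec ((((M s) * (M s).transpose)⁻¹).mulVec (fun j => g s j)) := by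
        rw [Matrix.mulVec_mulVec]
      show ((M s).mulVec (((M s).transpose * ((M s) * (M s).transpose)⁻¹).mulVec
        (fun j => g s j)) : Fin d → ℝ) = (fun j => g s j)
      rw [h2]
      exact h1
    -- norm bounds
    have hwle : ∀ t : ℝ, ‖wf hτ0 φ xs r t‖ ≤ μ := wf_norm_le hτ0 φ xs r hrdist
    have hsegdiff : ∀ s : ℝ, ‖segF τ xs (s + r) - segF τ Xc s‖ ≤ μ := by
      intro s
      refine (ContinuousMap.norm_le _ hμpos.le).mpr ?_
      intro q
      show ‖xs ((s + r) + q.1) - X (s + q.1)‖ ≤ μ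
      rw [hXval, show ((s:ℝ) + q.1) + r = (s + r) + q.1 by ring, sub_add_eq_sub_sub,
        sub_self, zero_sub, norm_neg, norm_smul]
      calc ‖ρfun (s + q.1)‖ * ‖wf hτ0 φ xs r (s + q.1)‖ ≤ 1 * μ := by
            refine mul_le_mul ?_ (hwle _) (norm_nonneg _) zero_le_one
            rw [Real.norm_eq_abs, abs_of_nonneg (ρfun_nonneg _)]
            exact ρfun_le_one _
        _ = μ := one_mul μ
    have hgle : ∀ s, ‖g s‖ ≤ Cκ * μ := by
      intro s
      have h1 : ‖b₁ s - b₂ s‖ ≤ Real.sqrt κ₁ * μ :=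
        le_trans (lip_b hlip hκ₁.le _ _)
          (mul_le_mul_of_nonneg_left (hsegdiff s) (Real.sqrt_nonneg _))
      have h2 : ‖D s‖ ≤ μ := by
        rw [hD]
        rcases lt_or_ge s 1 with h | h
        · rw [Set.indicator_of_mem (Set.mem_Iio.mpr h), norm_neg]
          exact hwle 0
        · rw [Set.indicator_of_notMem (by simpa using h), norm_zero]
          exact hμpos.le
      calc ‖g s‖ ≤ ‖b₁ s - b₂ s‖ + ‖D s‖ := norm_add_le _ _
        _ ≤ Real.sqrt κ₁ * μ + μ := add_le_add h1 h2
        _ = Cκ * μ := by rw [hCκ]; ring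
    have hub : ∀ s, ‖u s‖^2 ≤ (Cκ * μ)^2 / c := by
      intro s
      have h1 := (ellip_solve hc (M s) (hell (segF τ Xc s)) (fun j => g s j)).2
      have h4 : (fun i => u s i) = (M s).transpose.mulVec
          ((((M s) * (M s).transpose)⁻¹).mulVec (fun j => g s j)) := by
        rw [Matrix.mulVec_mulVec, hu_eq s, matVec_def]
      calc ‖u s‖^2 = ∑ i, (u s i)^2 := vec_normSq _
        _ = ∑ i, ((M s).transpose.mulVec ((((M s) * (M s).transpose)⁻¹).mulVec
            (fun j => g s j))) i ^ 2 := by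
            refine Finset.sum_congr rfl fun i _ => ?_
            rw [← congrFun h4 i]
        _ ≤ (∑ i, (g s i)^2) / c := h1
        _ = ‖g s‖^2 / c := by rw [vec_normSq]
        _ ≤ (Cκ * μ)^2 / c := by
            have h5 : ‖g s‖^2 ≤ (Cκ * μ)^2 := pow_le_pow_left₀ (norm_nonneg _) (hgle s) 2
            exact (div_le_div_iff_of_pos_right hc).mpr h5
    -- integrability
    have hb₁int : ∀ a b' : ℝ, IntervalIntegrable b₁ volume a b' :=
      fun a b' => hb₁cont.intervalIntegrable a b'
    have hb₂int : ∀ a b' : ℝ, IntervalIntegrable b₂ volume a b' :=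
      fun a b' => hb₂cont.intervalIntegrable a b'
    have hDint : ∀ a b' : ℝ, IntervalIntegrable D volume a b' :=
      fun a b' => intervalIntegrable_indicator_cont continuous_const measurableSet_Iio a b'
    -- measurability and Memℒp
    have humeas : AEStronglyMeasurable u (volume.restrict (Icc 0 T)) :=
      ((hu₁cont.stronglyMeasurable).add
        ((hu₂cont.stronglyMeasurable).indicator measurableSet_Iio)).aestronglyMeasurable
    haveI hfin : IsFiniteMeasure (volume.restrict (Icc (0:ℝ) T)) := by
      constructor
      rw [Measure.restrict_apply_univ]
      exact measure_Icc_lt_top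
    have humem : MemLp u 2 (volume.restrict (Icc 0 T)) := by
      refine MemLp.of_bound humeas (Real.sqrt ((Cκ * μ)^2 / c)) (ae_of_all _ fun s => ?_)
      have h1 := Real.sqrt_le_sqrt (hub s)
      rwa [Real.sqrt_sq (norm_nonneg _)] at h1
    -- segments of x agree with segments of Xc
    have hsegeq : ∀ s ∈ Icc (0:ℝ) T, seg hτT x s = segF τ Xc s := by
      intro s hs
      refine ContinuousMap.ext fun q => ?_
      have hmem : s + q.1 ∈ Icc (-τ) T := by
        constructor
        · have := q.2.1; have := hs.1; linarith
        · have := q.2.2; have := hs.2; linarith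
      show x (projIcc (-τ) T hτT (s + q.1)) = X (s + q.1)
      rw [projIcc_of_mem hτT hmem]
      rfl
    -- the control property
    have hcontrol : u ∈ controls hτT b σ' x := by
      refine ⟨humem, fun t ht => ?_⟩
      have hev : ∀ s, ∀ hs : s ∈ Icc (-τ) T, ev hτT x s = X s := by
        intro s hs
        show x (projIcc (-τ) T hτT s) = X s
        rw [projIcc_of_mem hτT hs]
        rfl
      have htm : t ∈ Icc (-τ) T := ⟨by have := ht.1; linarith, ht.2⟩
      have h0m : (0:ℝ) ∈ Icc (-τ) T := ⟨by linarith, by linarith⟩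
      rw [hev t htm, hev 0 h0m]
      have hI1 : ∫ s in (0:ℝ)..t, b (seg hτT x s) = ∫ s in (0:ℝ)..t, b₂ s := by
        apply intervalIntegral.integral_congr
        intro s hs
        rw [Set.uIcc_of_le ht.1] at hs
        show b (seg hτT x s) = b₂ s
        rw [hsegeq s ⟨hs.1, le_trans hs.2 ht.2⟩]
      have hI2 : ∫ s in (0:ℝ)..t, matVec (σ' (seg hτT x s)) (u s) = ∫ s in (0:ℝ)..t, g s := by
        apply intervalIntegral.integral_congr
        intro s hs
        rw [Set.uIcc_of_le ht.1] at hs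
        show matVec (σ' (seg hτT x s)) (u s) = g s
        rw [hsegeq s ⟨hs.1, le_trans hs.2 ht.2⟩]
        exact hkey s
      rw [hI1, hI2]
      have hsplit : ∫ s in (0:ℝ)..t, g s =
          (∫ s in (0:ℝ)..t, b₁ s) - (∫ s in (0:ℝ)..t, b₂ s) + ∫ s in (0:ℝ)..t, D s := by
        show ∫ s in (0:ℝ)..t, (b₁ s - b₂ s + D s) = _
        rw [intervalIntegral.integral_add ((hb₁int 0 t).sub (hb₂int 0 t)) (hDint 0 t),
          intervalIntegral.integral_sub (hb₁int 0 t) (hb₂int 0 t)]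
      have hb₁eval : ∫ s in (0:ℝ)..t, b₁ s = xs (t + r) - xs r :=
        dde_shift xs hdde hbcont hr.1 ht.1
      have hDeval : ∫ s in (0:ℝ)..t, D s = (min t 1) • (-e) := indicator_integral (-e) ht.1
      rw [hsplit, hb₁eval, hDeval]
      have hXt : X t = xs (t + r) + (1 - min t 1) • e := by
        rw [hXval, wf_of_nonneg hτ0 φ xs r ht.1, ρfun_of_nonneg ht.1, ← he]
      have hX0 : X 0 = xs (0 + r) + e := by
        rw [hXval, ρfun_of_nonpos le_rfl, one_smul, ← he]
      rw [hXt, hX0, zero_add, sub_smul, one_smul, smul_neg]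
      abel
    -- energy bound
    have hC2 : (0:ℝ) ≤ (Cκ * μ)^2 / c := by positivity
    have hFint : IntervalIntegrable (fun s => ‖u s‖^2) volume 0 T := by
      have hdec2 : (fun s : ℝ => ‖u s‖^2) = fun s =>
          (Iio (1:ℝ)).indicator (fun s' => ‖u₁ s' + u₂ s'‖^2) s +
          (Ici (1:ℝ)).indicator (fun s' => ‖u₁ s'‖^2) s := by
        funext s
        rcases lt_or_ge s 1 with h | h
        · rw [Set.indicator_of_mem (Set.mem_Iio.mpr h),
            Set.indicator_of_notMem (by simpa using h), add_zero]
          show ‖u₁ s + (Iio (1:ℝ)).indicator u₂ s‖^2 = _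
          rw [Set.indicator_of_mem (Set.mem_Iio.mpr h)]
        · rw [Set.indicator_of_notMem (by simpa using h),
            Set.indicator_of_mem (Set.mem_Ici.mpr h), zero_add]
          show ‖u₁ s + (Iio (1:ℝ)).indicator u₂ s‖^2 = _
          rw [Set.indicator_of_notMem (by simpa using h), add_zero]
      rw [hdec2]
      exact (intervalIntegrable_indicator_cont
          (((hu₁cont.add hu₂cont).norm).pow 2) measurableSet_Iio 0 T).add
        (intervalIntegrable_indicator_cont ((hu₁cont.norm).pow 2) measurableSet_Ici 0 T)
    have henergy : ∫ s in (0:ℝ)..T, ‖u s‖^2 ≤ T * ((Cκ * μ)^2 / c) := by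
      have hmono := intervalIntegral.integral_mono_on hT0.le hFint
        (intervalIntegrable_const) (fun s _ => hub s)
      rwa [intervalIntegral.integral_const, sub_zero, smul_eq_mul] at hmono
    -- conclude
    unfold rate
    refine le_trans (iInf₂_le u hcontrol) (ENNReal.ofReal_le_ofReal ?_)
    have halg : (1/2 : ℝ) * (T₁ * ((Cκ * μ)^2 / c)) = α := by
      rw [mul_pow, hμsq]
      field_simp
    have hle2 : (1/2 : ℝ) * ∫ s in (0:ℝ)..T, ‖u s‖^2 ≤ (1/2) * (T * ((Cκ * μ)^2 / c)) := by
      linarith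
    refine le_trans hle2 ?_
    rw [← halg]
    have : T * ((Cκ * μ)^2 / c) ≤ T₁ * ((Cκ * μ)^2 / c) :=
      mul_le_mul_of_nonneg_right hTle hC2
    linarith
end
end
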